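/- Let q ≥ 2 and p be integers, and let a, b, d be real numbers with b ≤ 0 and p > 4aq. For k ∈ S_n set f(k) = −pk(qk+1) + a(2qk+1)² + b·|2qk+1| + d. Then for every even n ≥ 2 and every k ∈ S_n with k ≠ −1/2 one has f(k) < f(−1/2), and for every odd n ≥ 1 and every k ∈ S_n with k ≠ 0 one has f(k) < f(0). Consequently, for every n ≥ 1, max_{k∈S_n} ( pq(n²−1)/4 + f(k) ) = (pq/4)·n² + C_ε, where C_ε depends only on the parity ε of n (C₀ = f(−1/2) − pq/4 for n even, C₁ = f(0) − pq/4 for n odd); in particular the coefficient of n is 0. (The 'concave down' maximization step in the proof of Proposition 3.4.) -/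
import Mathlib


/-- `Sn n` is the set of real numbers `k = j/2` where `j` is an integer with
`|j| ≤ n − 1` and `j ≡ n − 1 (mod 2)`; i.e. the integers (if `n` is odd) or
half-odd-integers (if `n` is even) `k` with `|k| ≤ (n−1)/2`. -/
def Sn (n : ℤ) : Set ℝ :=
  {k | ∃ j : ℤ, k = (j : ℝ) / 2 ∧ |j| ≤ n - 1 ∧ j % 2 = (n - 1) % 2}

private lemma int1 (q j : ℤ) (hq : 2 ≤ q) (hj : j % 2 = 1) (hjne : j ≠ -1) :
    q - 1 < |q * j + 1| := by
  rcases le_or_gt 1 j with h | h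
  · have h1 : q ≤ q * j := le_mul_of_one_le_right (by omega) h
    have := le_abs_self (q * j + 1)
    omega
  · have hj2 : j ≤ -2 := by omega
    have h1 : q * j ≤ q * (-2) := mul_le_mul_of_nonneg_left hj2 (by omega)
    have := neg_abs_le (q * j + 1)
    omega

private lemma int2 (q j : ℤ) (hq : 2 ≤ q) (hj : j % 2 = 0) (hjne : j ≠ 0) :
    1 < |q * j + 1| := by
  rcases le_or_gt 1 j with h | h
  · have h1 : q ≤ q * j := le_mul_of_one_le_right (by omega) h
    have := le_abs_self (q * j + 1)
    omega
  · have hj2 : j ≤ -2 := by omega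
    have h1 : q * j ≤ q * (-2) := mul_le_mul_of_nonneg_left hj2 (by omega)
    have := neg_abs_le (q * j + 1)
    omega

/-- The 'concave down' maximization step in the proof of Proposition 3.4 of
Kalfagianni–Tran. -/
theorem statement3 (p q : ℤ) (hq : 2 ≤ q) (a b d : ℝ) (hb : b ≤ 0)
    (hp : 4 * a * (q : ℝ) < (p : ℝ))
    (f : ℝ → ℝ)
    (hf : ∀ k : ℝ, f k =
      -(p : ℝ) * k * ((q : ℝ) * k + 1) + a * (2 * (q : ℝ) * k + 1) ^ 2 +
        b * |2 * (q : ℝ) * k + 1| + d) :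
    (∀ n : ℤ, 2 ≤ n → Even n → ∀ k ∈ Sn n, k ≠ -(1 / 2 : ℝ) →
      f k < f (-(1 / 2 : ℝ))) ∧
    (∀ n : ℤ, 1 ≤ n → Odd n → ∀ k ∈ Sn n, k ≠ (0 : ℝ) → f k < f 0) ∧
    (∀ n : ℤ, 1 ≤ n →
      IsGreatest ((fun k => (p : ℝ) * (q : ℝ) * ((n : ℝ) ^ 2 - 1) / 4 + f k) '' Sn n)
        ((p : ℝ) * (q : ℝ) / 4 * (n : ℝ) ^ 2 +
          (if Even n then f (-(1 / 2 : ℝ)) - (p : ℝ) * (q : ℝ) / 4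
           else f 0 - (p : ℝ) * (q : ℝ) / 4))) := by
  have hq' : (2 : ℝ) ≤ (q : ℝ) := by exact_mod_cast hq
  have hq0 : (0 : ℝ) < (q : ℝ) := by linarith
  -- key monotonicity lemma
  have key : ∀ k1 k2 : ℝ, |2 * (q : ℝ) * k1 + 1| < |2 * (q : ℝ) * k2 + 1| →
      f k2 < f k1 := by
    intro k1 k2 hlt
    have hc : a - (p : ℝ) / (4 * q) < 0 := by
      rw [sub_neg, lt_div_iff₀ (by positivity)]
      nlinarith
    have hform : ∀ k : ℝ, f k = (a - (p : ℝ) / (4 * q)) * |2 * (q : ℝ) * k + 1| ^ 2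
        + b * |2 * (q : ℝ) * k + 1| + (d + (p : ℝ) / (4 * q)) := by
      intro k
      rw [hf k, sq_abs]
      field_simp
      ring
    rw [hform k1, hform k2]
    set t1 := |2 * (q : ℝ) * k1 + 1| with ht1d
    set t2 := |2 * (q : ℝ) * k2 + 1| with ht2d
    have ht1 : (0 : ℝ) ≤ t1 := abs_nonneg _
    have h1 : (a - (p : ℝ) / (4 * q)) * ((t2 - t1) * (t2 + t1)) < 0 :=
      mul_neg_of_neg_of_pos hc (mul_pos (by linarith) (by linarith))
    have h2 : (0 : ℝ) ≤ -b * (t2 - t1) := mul_nonneg (by linarith) (by linarith)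
    nlinarith [h1, h2]
  -- abs at special points / lattice points
  have habs : ∀ j : ℤ, |2 * (q : ℝ) * ((j : ℝ) / 2) + 1| = ((|q * j + 1| : ℤ) : ℝ) := by
    intro j
    push_cast
    congr 1
    ring
  have habs_half : |2 * (q : ℝ) * (-(1 / 2 : ℝ)) + 1| = ((q : ℝ) - 1) := by
    rw [abs_of_nonpos (by linarith)]; ring
  have habs_zero : |2 * (q : ℝ) * (0 : ℝ) + 1| = 1 := by norm_num
  have part1 : ∀ n : ℤ, 2 ≤ n → Even n → ∀ k ∈ Sn n, k ≠ -(1 / 2 : ℝ) →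
      f k < f (-(1 / 2 : ℝ)) := by
    intro n hn hne k hk hkne
    obtain ⟨j, hkj, hjle, hjm⟩ := hk
    have hnm : n % 2 = 0 := Int.even_iff.mp hne
    have hjodd : j % 2 = 1 := by omega
    have hjne : j ≠ -1 := by
      intro h; apply hkne; rw [hkj, h]; norm_num
    apply key
    rw [habs_half, hkj, habs j]
    exact_mod_cast int1 q j hq hjodd hjne
  have part2 : ∀ n : ℤ, 1 ≤ n → Odd n → ∀ k ∈ Sn n, k ≠ (0 : ℝ) → f k < f 0 := by
    intro n hn hno k hk hkne
    obtain ⟨j, hkj, hjle, hjm⟩ := hk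
    have hjne : j ≠ 0 := by
      intro h; apply hkne; rw [hkj, h]; norm_num
    apply key
    rw [habs_zero, hkj, habs j]
    have hjev : j % 2 = 0 := by
      have := Int.odd_iff.mp hno; omega
    exact_mod_cast int2 q j hq hjev hjne
  refine ⟨part1, part2, ?_⟩
  intro n hn
  rcases Int.even_or_odd n with hne | hno
  · have hn2 : 2 ≤ n := by
      rcases hne with ⟨r, hr⟩; omega
    rw [if_pos hne]
    constructor
    · refine ⟨-(1 / 2 : ℝ), ⟨-1, by norm_num, by simp only [abs_neg, abs_one]; omega, by
        have := Int.even_iff.mp hne; omega⟩, ?_⟩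
      push_cast
      ring
    · rintro x ⟨k, hk, rfl⟩
      have hfk : f k ≤ f (-(1 / 2 : ℝ)) := by
        by_cases h : k = -(1 / 2 : ℝ)
        · rw [h]
        · exact le_of_lt (part1 n hn2 hne k hk h)
      simp only
      nlinarith [hfk]
  · have hnodd : ¬ Even n := by simpa [Int.not_even_iff_odd] using hno
    rw [if_neg hnodd]
    constructor
    · refine ⟨0, ⟨0, by norm_num, by simp only [abs_zero]; omega, by
        have := Int.odd_iff.mp hno; omega⟩, ?_⟩
      push_cast
      ring
    · rintro x ⟨k, hk, rfl⟩
      have hfk : f k ≤ f 0 := by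
        by_cases h : k = (0 : ℝ)
        · rw [h]
        · exact le_of_lt (part2 n hn hno k hk h)
      simp only
      nlinarith [hfk]
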